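/- arXiv:1804.02091 — 2 statements merged into one kernel-verified Lean document; each statement's English description precedes it below -/
import Mathlib

section
/- det(z - E_{[0,n-1]}) = (z + conj(α_0) α_{-1}) det(z - E_{[1,n-1]}) - ρ_0 α_{-1} det P_{n-1}, and det(z - C_{[0,n-1]}) = (z - conj(α_0)) det(z - E_{[1,n-1]}) + ρ_0 det P_{n-1}, where P_{n-1} is the common cofactor matrix. -/
open Polynomial Matrix Complex
open scoped ComplexConjugate

noncomputable section

/-- `ρ_n = sqrt(1 - |α_n|²)`. -/
def rhoC (α : ℤ → ℂ) (n : ℤ) : ℝ := Real.sqrt (1 - ‖α n‖ ^ 2)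

/-- Entry `(i,k)` of the extended CMV matrix with Verblunsky coefficients `α`. -/
def cmvEntry (α : ℤ → ℂ) (i k : ℤ) : ℂ :=
  if i % 2 = 0 then
    if k = i - 1 then conj (α i) * rhoC α (i - 1)
    else if k = i then -conj (α i) * α (i - 1)
    else if k = i + 1 then conj (α (i + 1)) * rhoC α i
    else if k = i + 2 then (rhoC α (i + 1) : ℂ) * rhoC α i
    else 0
  else
    if k = i - 2 then (rhoC α (i - 1) : ℂ) * rhoC α (i - 2)
    else if k = i - 1 then -(rhoC α (i - 1) : ℂ) * α (i - 2)
    else if k = i then -conj (α i) * α (i - 1)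
    else if k = i + 1 then -α (i - 1) * rhoC α i
    else 0

/-- The restriction of the extended CMV matrix to the window `[a, a+m-1]`. -/
def cmvWindow (α : ℤ → ℂ) (a : ℤ) (m : ℕ) : Matrix (Fin m) (Fin m) ℂ :=
  Matrix.of fun i j => cmvEntry α (a + (i : ℕ)) (a + (j : ℕ))

/-- Extension of half-line Verblunsky coefficients, using the convention `α_{-1} = -1`,
under which the half-line CMV matrix is the restriction of the extended one to `[0,∞)`. -/
def halfAlpha (α : ℕ → ℂ) : ℤ → ℂ := fun n => if n < 0 then -1 else α n.toNat

/-- `det(z - X_{[a,a+m-1]})` as a polynomial in `z`, for `X` the extended CMV matrix of `α`. -/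
def windowPoly (α : ℤ → ℂ) (a : ℤ) (m : ℕ) : Polynomial ℂ :=
  ((Polynomial.X : Polynomial ℂ) • (1 : Matrix (Fin m) (Fin m) (Polynomial ℂ)) -
    (cmvWindow α a m).map Polynomial.C).det

/-- `det(z - X_{[a,a+m-1]})` evaluated at a point `z`. -/
def windowDet (α : ℤ → ℂ) (z : ℂ) (a : ℤ) (m : ℕ) : ℂ := (windowPoly α a m).eval z

/-- Reversed polynomial at degree `n`: coefficients are conjugated and reversed
within indices `0, …, n`, so `(revPoly n Q)(z) = zⁿ conj(Q(1/conj z))`. -/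
def revPoly (n : ℕ) (Q : Polynomial ℂ) : Polynomial ℂ :=
  ∑ k ∈ Finset.range (n + 1), Polynomial.C (conj (Q.coeff (n - k))) * Polynomial.X ^ k

/-- The monic orthogonal polynomials `Φ_n` defined by the Szegő recursion
`Φ_{k+1}(z) = z Φ_k(z) - conj(α_k) Φ_k*(z)`, `Φ_0 = 1`. -/
def monicOPUC (α : ℕ → ℂ) : ℕ → Polynomial ℂ
  | 0 => 1
  | n + 1 => Polynomial.X * monicOPUC α n -
      Polynomial.C (conj (α n)) * revPoly n (monicOPUC α n)

/-- The Szegő cocycle matrix `S^z_α = (1/ρ)[[z, -conj α],[-αz, 1]]`. -/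
def szego (z α : ℂ) : Matrix (Fin 2) (Fin 2) ℂ :=
  ((Real.sqrt (1 - ‖α‖ ^ 2) : ℂ))⁻¹ • !![z, -conj α; -α * z, 1]

/-- The `n`-step Szegő transfer matrix `S^z_n = S^z_{α_{n-1}} ⋯ S^z_{α_0}`. -/
def szegoTransfer (α : ℕ → ℂ) (z : ℂ) : ℕ → Matrix (Fin 2) (Fin 2) ℂ
  | 0 => 1
  | n + 1 => szego z (α n) * szegoTransfer α z n

/-- The matrix `P_m` appearing in the cofactor expansion of `det(z - E_{[0,m]})`
along the first column: the minor of `z - E_{[0,m]}` deleting row `1` and column `0`. -/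
def Pmat (α : ℤ → ℂ) (z : ℂ) (m : ℕ) : Matrix (Fin m) (Fin m) ℂ :=
  (z • (1 : Matrix (Fin (m + 1)) (Fin (m + 1)) ℂ) - cmvWindow α 0 (m + 1)).submatrix
    (Fin.succAbove 1) (Fin.succAbove 0)

private lemma windowDet_eq_det (α : ℤ → ℂ) (z : ℂ) (a : ℤ) (m : ℕ) :
    windowDet α z a m = (z • (1 : Matrix (Fin m) (Fin m) ℂ) - cmvWindow α a m).det := by
  unfold windowDet windowPoly
  rw [← Polynomial.coe_evalRingHom, RingHom.map_det]
  congr 1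
  ext i j
  by_cases h : i = j <;>
    simp [Matrix.map_apply, Matrix.sub_apply, Matrix.smul_apply, Matrix.one_apply, h]

private lemma cmvEntry_col_zero (α : ℤ → ℂ) (i : ℤ) (hi : 2 ≤ i) : cmvEntry α i 0 = 0 := by
  unfold cmvEntry
  split_ifs <;> first | rfl | omega

private lemma halfAlpha_apply (α : ℤ → ℂ) (n : ℤ) (h : 0 ≤ n) :
    halfAlpha (fun k : ℕ => α k) n = α n := by
  simp [halfAlpha, not_lt.2 h, Int.toNat_of_nonneg h]

private lemma rho_halfAlpha (α : ℤ → ℂ) (n : ℤ) (h : 0 ≤ n) :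
    rhoC (halfAlpha fun k : ℕ => α k) n = rhoC α n := by
  unfold rhoC; rw [halfAlpha_apply α n h]

private lemma cmvEntry_halfAlpha (α : ℤ → ℂ) (i j : ℤ) (hi : 0 ≤ i) (hj : 1 ≤ j) :
    cmvEntry (halfAlpha fun k : ℕ => α k) i j = cmvEntry α i j := by
  unfold cmvEntry rhoC halfAlpha
  split_ifs <;> first | rfl | omega |
    simp_all [Int.toNat_of_nonneg, show ∀ a : ℤ, ¬ a < 0 → (a.toNat : ℤ) = a from
      fun a ha => Int.toNat_of_nonneg (by omega)]

private lemma minor_zero (β : ℤ → ℂ) (z : ℂ) (n : ℕ)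
    (A : Matrix (Fin (n + 2)) (Fin (n + 2)) ℂ)
    (hA : A = z • (1 : Matrix (Fin (n + 2)) (Fin (n + 2)) ℂ) - cmvWindow β 0 (n + 2)) :
    A.submatrix (Fin.succAbove (0 : Fin (n + 2))) Fin.succ =
      z • (1 : Matrix (Fin (n + 1)) (Fin (n + 1)) ℂ) - cmvWindow β 1 (n + 1) := by
  subst hA
  ext i j
  have harg : ∀ k : Fin (n + 1), (0 : ℤ) + ((k.succ : Fin (n + 2)) : ℕ) = 1 + (k : ℕ) := by
    intro k; simp [Fin.val_succ]; ring
  simp only [Matrix.submatrix_apply, Fin.succAbove_zero, Matrix.sub_apply, Matrix.smul_apply,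
    Matrix.one_apply, Fin.succ_inj, cmvWindow, Matrix.of_apply, harg]

private lemma expand (β : ℤ → ℂ) (z : ℂ) (n : ℕ) :
    windowDet β z 0 (n + 2) =
      (z + conj (β 0) * β (-1)) * windowDet β z 1 (n + 1) -
        (rhoC β 0 : ℂ) * β (-1) * (Pmat β z (n + 1)).det := by
  rw [windowDet_eq_det, windowDet_eq_det]
  set A := z • (1 : Matrix (Fin (n + 2)) (Fin (n + 2)) ℂ) - cmvWindow β 0 (n + 2) with hA
  have hdet := Matrix.det_succ_column_zero A
  rw [Fin.sum_univ_succ, Fin.sum_univ_succ] at hdet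
  have htail : ∀ i : Fin n,
      (-1 : ℂ) ^ (((i.succ.succ : Fin (n + 2))) : ℕ) * A i.succ.succ 0 *
        (A.submatrix (Fin.succAbove i.succ.succ) Fin.succ).det = 0 := by
    intro i
    have h0 : A i.succ.succ 0 = 0 := by
      have hne : (i.succ.succ : Fin (n + 2)) ≠ 0 := Fin.succ_ne_zero _
      have hentry : cmvEntry β (((i : ℕ) : ℤ) + 1 + 1) 0 = 0 :=
        cmvEntry_col_zero β _ (by omega)
      simp [hA, Matrix.sub_apply, Matrix.smul_apply, Matrix.one_apply, hne, cmvWindow,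
        hentry]
    rw [h0]; ring
  rw [Finset.sum_congr rfl (fun i _ => htail i), Finset.sum_const_zero] at hdet
  have he0 : cmvEntry β 0 0 = -conj (β 0) * β (-1) := by norm_num [cmvEntry]
  have he1 : cmvEntry β 1 0 = -(rhoC β 0 : ℂ) * β (-1) := by norm_num [cmvEntry]
  have hA00 : A 0 0 = z + conj (β 0) * β (-1) := by
    simp [hA, Matrix.sub_apply, Matrix.smul_apply, Matrix.one_apply, cmvWindow, he0]
  have hA10 : A (Fin.succ 0) 0 = (rhoC β 0 : ℂ) * β (-1) := by
    have hne : (Fin.succ 0 : Fin (n + 2)) ≠ 0 := Fin.succ_ne_zero _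
    simp [hA, Matrix.sub_apply, Matrix.smul_apply, Matrix.one_apply, hne, cmvWindow, he1]
  have hminor0 : (A.submatrix (Fin.succAbove (0 : Fin (n + 2))) Fin.succ) =
      z • (1 : Matrix (Fin (n + 1)) (Fin (n + 1)) ℂ) - cmvWindow β 1 (n + 1) :=
    minor_zero β z n A hA
  have hminor1 : (A.submatrix (Fin.succAbove (Fin.succ (0 : Fin (n + 1)))) Fin.succ) =
      Pmat β z (n + 1) := by
    rw [Pmat, ← hA, Fin.succ_zero_eq_one, Fin.succAbove_zero]
  rw [hminor0, hminor1, hA00, hA10] at hdet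
  rw [hdet]
  simp [Fin.val_succ]
  ring

private lemma windowDet_halfAlpha (α : ℤ → ℂ) (z : ℂ) (m : ℕ) :
    windowDet (halfAlpha fun k : ℕ => α k) z 1 m = windowDet α z 1 m := by
  have : cmvWindow (halfAlpha fun k : ℕ => α k) 1 m = cmvWindow α 1 m := by
    ext i j
    simp only [cmvWindow, Matrix.of_apply]
    exact cmvEntry_halfAlpha α _ _ (by positivity) (by simp)
  unfold windowDet windowPoly
  rw [this]

private lemma Pmat_halfAlpha (α : ℤ → ℂ) (z : ℂ) (m : ℕ) :
    Pmat (halfAlpha fun k : ℕ => α k) z m = Pmat α z m := by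
  unfold Pmat
  ext i j
  simp only [Matrix.submatrix_apply, Fin.succAbove_zero, Matrix.sub_apply, Matrix.smul_apply,
    Matrix.one_apply, cmvWindow, Matrix.of_apply]
  rw [cmvEntry_halfAlpha α _ _ (by positivity) (by simp [Fin.val_succ])]

theorem cofactor_expansions_with_Pmat (α : ℤ → ℂ)
    (hα : ∀ k, ‖α k‖ < 1) (m : ℕ) (hm : 1 ≤ m) (z : ℂ) :
    windowDet α z 0 (m + 1) =
        (z + conj (α 0) * α (-1)) * windowDet α z 1 m -
          (rhoC α 0 : ℂ) * α (-1) * (Pmat α z m).det ∧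
      windowDet (halfAlpha fun k : ℕ => α k) z 0 (m + 1) =
        (z - conj (α 0)) * windowDet α z 1 m + (rhoC α 0 : ℂ) * (Pmat α z m).det := by
  obtain ⟨n, rfl⟩ : ∃ n, m = n + 1 := ⟨m - 1, by omega⟩
  constructor
  · exact expand α z n
  · have h := expand (halfAlpha fun k : ℕ => α k) z n
    rw [halfAlpha_apply α 0 le_rfl, rho_halfAlpha α 0 le_rfl, windowDet_halfAlpha,
      Pmat_halfAlpha, show (halfAlpha fun k : ℕ => α k) (-1) = -1 by simp [halfAlpha]] at h
    rw [h]; ring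

end
end

section
/- For |z| = 1, the norm of the n-step Szegő transfer matrix satisfies ‖S^z_n‖ ≤ 8 (∏_{j=0}^{n-1} ρ_j^{-1}) · max{|det(z - C_{[0,n-1]})|, |det(z - C_{[1,n-1]})|}. -/
open Polynomial Matrix Complex
open scoped ComplexConjugate

noncomputable section

def uvP (α : ℕ → ℂ) (z : ℂ) : ℕ → ℂ × ℂ
  | 0 => (1, 0)
  | n + 1 => (z * (uvP α z n).1 - conj (α n) * (z ^ n * conj (uvP α z n).2),
      z * (uvP α z n).2 - conj (α n) * (z ^ n * conj (uvP α z n).1))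
lemma rho_pos {a : ℂ} (h : ‖a‖ < 1) : 0 < Real.sqrt (1 - ‖a‖ ^ 2) := by
  apply Real.sqrt_pos.2
  nlinarith [norm_nonneg a]
lemma rho_smul_szego {a : ℂ} (h : ‖a‖ < 1) (z : ℂ) :
    (Real.sqrt (1 - ‖a‖ ^ 2) : ℂ) • szego z a = !![z, -conj a; -a * z, 1] := by
  rw [szego, smul_smul, mul_inv_cancel₀, one_smul]
  exact_mod_cast (rho_pos h).ne'
lemma stepA (α : ℕ → ℂ) (hα : ∀ k, ‖α k‖ < 1) (z : ℂ) (hz : z * conj z = 1)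
    (n : ℕ) :
    ((∏ j ∈ Finset.range n, (Real.sqrt (1 - ‖α j‖ ^ 2) : ℂ))) • szegoTransfer α z n
      = !![(uvP α z n).1, (uvP α z n).2;
           z ^ n * conj (uvP α z n).2, z ^ n * conj (uvP α z n).1] := by
  induction n with
  | zero =>
    ext i j
    fin_cases i <;> fin_cases j <;> simp [szegoTransfer, uvP, Matrix.one_apply]
  | succ n ih =>
    have hzn : z ^ n * (conj z) ^ n = 1 := by rw [← mul_pow, hz, one_pow]
    have key : ((∏ j ∈ Finset.range (n+1), (Real.sqrt (1 - ‖α j‖ ^ 2) : ℂ)))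
        • szegoTransfer α z (n+1)
        = !![z, -conj (α n); -(α n) * z, 1] *
          !![(uvP α z n).1, (uvP α z n).2;
             z ^ n * conj (uvP α z n).2, z ^ n * conj (uvP α z n).1] := by
      rw [← ih, ← rho_smul_szego (hα n), Finset.prod_range_succ]
      show _ • (szego z (α n) * szegoTransfer α z n) = _
      rw [Matrix.smul_mul, Matrix.mul_smul, smul_smul, mul_comm]
    rw [key]
    ext i j
    fin_cases i <;> fin_cases j <;>
      simp [Matrix.mul_apply, Fin.sum_univ_two, uvP, map_sub, _root_.map_mul, map_pow]
    · ring
    · ring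
    · linear_combination (α n * z * (uvP α z n).1) * hzn - (z ^ n * conj ((uvP α z n).2)) * hz
    · linear_combination (α n * z * (uvP α z n).2) * hzn - (z ^ n * conj ((uvP α z n).1)) * hz
def sh2 (γ : ℤ → ℂ) : ℤ → ℂ := fun t => γ (t + 2)
def Adet (γ : ℤ → ℂ) (z : ℂ) (m : ℕ) : ℂ :=
  (z • (1 : Matrix (Fin m) (Fin m) ℂ) - cmvWindow γ 0 m).det
def Bdet (γ : ℤ → ℂ) (z : ℂ) (m : ℕ) : ℂ :=
  (z • (1 : Matrix (Fin m) (Fin m) ℂ) - cmvWindow γ 1 m).det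
def Pdet (γ : ℤ → ℂ) (z : ℂ) (m : ℕ) : ℂ := (Pmat γ z m).det
lemma val_succAbove {n : ℕ} (p : Fin (n + 1)) (i : Fin n) :
    (p.succAbove i : ℕ) = if (i : ℕ) < (p : ℕ) then (i : ℕ) else (i : ℕ) + 1 := by
  unfold Fin.succAbove
  split <;> rename_i h
  · rw [if_pos (by simpa [Fin.lt_def] using h)]; rfl
  · rw [if_neg (by simpa [Fin.lt_def] using h)]; rfl
lemma cmv_zero_col0 (γ : ℤ → ℂ) {i : ℤ} (h : 2 ≤ i) (k : ℤ) (hk : k = 0) :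
    cmvEntry γ i k = 0 := by
  unfold cmvEntry; split_ifs <;> first | rfl | (exfalso; omega)
lemma cmv_zero_col1 (γ : ℤ → ℂ) {i : ℤ} (h : 4 ≤ i) (k : ℤ) (hk : k = 1) :
    cmvEntry γ i k = 0 := by
  unfold cmvEntry; split_ifs <;> first | rfl | (exfalso; omega)
lemma cmv_zero_row0 (γ : ℤ → ℂ) {k : ℤ} (h : 3 ≤ k) (i : ℤ) (hi : i = 0) :
    cmvEntry γ i k = 0 := by
  unfold cmvEntry; split_ifs <;> first | rfl | (exfalso; omega)
lemma cmv_zero_row1 (γ : ℤ → ℂ) {k : ℤ} (h : 3 ≤ k) (i : ℤ) (hi : i = 1) :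
    cmvEntry γ i k = 0 := by
  unfold cmvEntry; split_ifs <;> first | rfl | (exfalso; omega)

/-- entries of shifted windows -/
lemma cmv_shift2 (γ : ℤ → ℂ) (i k : ℤ) :
    cmvEntry γ (i + 2) (k + 2) = cmvEntry (sh2 γ) i k := by
  have hr : ∀ x : ℤ, rhoC (sh2 γ) x = rhoC γ (x + 2) := fun x => rfl
  have hg : ∀ x : ℤ, sh2 γ x = γ (x + 2) := fun x => rfl
  unfold cmvEntry
  have e1 : (i + 2) % 2 = i % 2 := by omega
  rw [e1]
  simp only [hr, hg,
    show ((k + 2 : ℤ) = (i + 2) - 1) = (k = i - 1) from propext (by omega),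
    show ((k + 2 : ℤ) = i + 2) = (k = i) from propext (by omega),
    show ((k + 2 : ℤ) = (i + 2) + 1) = (k = i + 1) from propext (by omega),
    show ((k + 2 : ℤ) = (i + 2) + 2) = (k = i + 2) from propext (by omega),
    show ((k + 2 : ℤ) = (i + 2) - 2) = (k = i - 2) from propext (by omega), add_left_inj,
    show ((i : ℤ) + 2 - 1) = (i - 1) + 2 from by ring,
    show ((i : ℤ) + 2 + 1) = (i + 1) + 2 from by ring,
    show ((i : ℤ) + 2 - 2) = (i - 2) + 2 from by ring]
lemma window_shift2 (γ : ℤ → ℂ) (a : ℤ) (m : ℕ) :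
    cmvWindow γ (a + 2) m = cmvWindow (sh2 γ) a m := by
  ext i j
  show cmvEntry γ (a + 2 + (i : ℕ)) (a + 2 + (j : ℕ)) = cmvEntry (sh2 γ) (a + (i : ℕ)) (a + (j : ℕ))
  rw [← cmv_shift2]
  congr 1 <;> ring

/-- generic window entry equality -/
lemma win_entry_eq (γ : ℤ → ℂ) (z : ℂ) {m m' : ℕ} (a a' : ℤ) (r c : Fin m) (r' c' : Fin m')
    (h1 : a + ((r : ℕ) : ℤ) = a' + ((r' : ℕ) : ℤ)) (h2 : a + ((c : ℕ) : ℤ) = a' + ((c' : ℕ) : ℤ)) :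
    (z • (1 : Matrix (Fin m) (Fin m) ℂ) - cmvWindow γ a m) r c
      = (z • (1 : Matrix (Fin m') (Fin m') ℂ) - cmvWindow γ a' m') r' c' := by
  have hiff : (r = c) ↔ (r' = c') := by
    rw [Fin.ext_iff, Fin.ext_iff]; omega
  simp only [Matrix.sub_apply, Matrix.smul_apply, Matrix.one_apply, smul_eq_mul]
  rw [show cmvWindow γ a m r c = cmvEntry γ (a + (r : ℕ)) (a + (c : ℕ)) from rfl,
    show cmvWindow γ a' m' r' c' = cmvEntry γ (a' + (r' : ℕ)) (a' + (c' : ℕ)) from rfl, h1, h2]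
  by_cases h : r = c
  · rw [if_pos h, if_pos (hiff.mp h)]
  · rw [if_neg h, if_neg (fun hh => h (hiff.mpr hh))]
lemma L1 (γ : ℤ → ℂ) (z : ℂ) (m : ℕ) :
    Adet γ z (m + 2) = (z + conj (γ 0) * γ (-1)) * Bdet γ z (m + 1)
      - γ (-1) * (rhoC γ 0 : ℂ) * Pdet γ z (m + 1) := by
  set M := z • (1 : Matrix (Fin (m + 2)) (Fin (m + 2)) ℂ) - cmvWindow γ 0 (m + 2) with hM
  have hdet : Adet γ z (m + 2) = M.det := rfl
  have h00 : M 0 0 = z + conj (γ 0) * γ (-1) := by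
    show z * _ - cmvEntry γ (0 + ((0:ℕ):ℤ)) (0 + ((0:ℕ):ℤ)) = _
    norm_num [cmvEntry, rhoC]
  have h10 : M 1 0 = (rhoC γ 0 : ℂ) * γ (-1) := by
    show z * _ - cmvEntry γ (0 + ((1:ℕ):ℤ)) (0 + ((0:ℕ):ℤ)) = _
    norm_num [cmvEntry, Matrix.one_apply]
  have hrest : ∀ j : Fin m, M j.succ.succ 0 = 0 := by
    intro j
    show z * _ - cmvEntry γ (0 + ((((j.succ.succ : Fin (m+2)) : ℕ)):ℤ)) (0 + ((0:ℕ):ℤ)) = 0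
    rw [Matrix.one_apply_ne (by exact Fin.succ_ne_zero _), cmv_zero_col0 γ (by
      simp [Fin.val_succ]; omega) _ (by norm_num)]
    ring
  have hminor0 : M.submatrix (Fin.succAbove 0) Fin.succ
      = z • (1 : Matrix (Fin (m+1)) (Fin (m+1)) ℂ) - cmvWindow γ 1 (m + 1) := by
    ext i j
    rw [Matrix.submatrix_apply, Fin.zero_succAbove]
    exact win_entry_eq γ z 0 1 i.succ j.succ i j (by simp [Fin.val_succ]; omega)
      (by simp [Fin.val_succ]; omega)
  have hminor1 : M.submatrix (Fin.succAbove 1) Fin.succ = Pmat γ z (m + 1) := by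
    unfold Pmat
    rw [← hM, show (Fin.succAbove (0 : Fin (m+2))) = (Fin.succ : Fin (m+1) → Fin (m+2)) from
      funext fun i => Fin.zero_succAbove i]
  rw [hdet, Matrix.det_succ_column_zero, Fin.sum_univ_succ, Fin.sum_univ_succ]
  simp only [Fin.succ_zero_eq_one, Fin.val_zero, Fin.val_one, pow_zero, pow_one]
  rw [h00, h10, hminor0, hminor1]
  rw [Finset.sum_eq_zero (fun j _ => by rw [hrest]; ring)]
  show _ = _ * Bdet γ z (m+1) - _ * _ * Pdet γ z (m+1)
  unfold Bdet Pdet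
  ring
lemma det_row0_single {n : ℕ} (M : Matrix (Fin (n + 1)) (Fin (n + 1)) ℂ)
    (h : ∀ j : Fin n, M 0 j.succ = 0) :
    M.det = M 0 0 * (M.submatrix Fin.succ (Fin.succAbove 0)).det := by
  rw [Matrix.det_succ_row_zero, Fin.sum_univ_succ,
    Finset.sum_eq_zero (fun j _ => by rw [h]; ring)]
  simp
lemma win_apply (γ : ℤ → ℂ) (z : ℂ) (a : ℤ) (m : ℕ) (i j : Fin m) :
    (z • (1 : Matrix (Fin m) (Fin m) ℂ) - cmvWindow γ a m) i j
      = (if (i : ℕ) = (j : ℕ) then z else 0) - cmvEntry γ (a + (i : ℕ)) (a + (j : ℕ)) := by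
  simp only [Matrix.sub_apply, Matrix.smul_apply, Matrix.one_apply, smul_eq_mul]
  congr 1
  rcases eq_or_ne i j with h | h
  · rw [if_pos h, if_pos (by rw [h]), mul_one]
  · rw [if_neg h, if_neg (fun hh => h (Fin.ext hh)), mul_zero]
lemma succAbove_zero_of_pos {n : ℕ} (p : Fin (n + 2)) (hp : 0 < p) :
    p.succAbove 0 = 0 := by
  have h := Fin.lt_def.mp hp
  simp only [Fin.val_zero] at h
  rw [Fin.ext_iff, val_succAbove]
  simp [h]
lemma L2 (γ : ℤ → ℂ) (z : ℂ) (k : ℕ) :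
    Bdet γ z (k + 3) = (z + conj (γ 1) * γ 0) * Adet (sh2 γ) z (k + 2)
      + conj (γ 2) * γ 0 * ((rhoC γ 1 : ℂ)) ^ 2 * Bdet (sh2 γ) z (k + 1)
      - γ 0 * ((rhoC γ 1 : ℂ)) ^ 2 * (rhoC γ 2 : ℂ) * Pdet (sh2 γ) z (k + 1) := by
  set W := z • (1 : Matrix (Fin (k + 3)) (Fin (k + 3)) ℂ) - cmvWindow γ 1 (k + 3) with hW
  have hdet : Bdet γ z (k + 3) = W.det := rfl
  have h00 : W 0 0 = z + conj (γ 1) * γ 0 := by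
    rw [hW, win_apply]
    norm_num [cmvEntry]
  have h10 : W (0 : Fin (k+2)).succ 0 = -(conj (γ 2) * (rhoC γ 1 : ℂ)) := by
    rw [hW, win_apply]
    norm_num [Fin.val_succ, cmvEntry]
  have h20 : W (0 : Fin (k+1)).succ.succ 0 = -((rhoC γ 2 : ℂ) * (rhoC γ 1 : ℂ)) := by
    rw [hW, win_apply]
    simp only [Fin.val_succ, Fin.val_zero]; norm_num [Fin.val_succ, cmvEntry]
  have hrest : ∀ j : Fin k, W j.succ.succ.succ 0 = 0 := by
    intro j
    rw [hW, win_apply, cmv_zero_col1 γ (by simp [Fin.val_succ]; push_cast; omega) _ (by norm_num)]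
    simp [Fin.val_succ]
  have hminor0 : W.submatrix (Fin.succAbove 0) Fin.succ
      = z • (1 : Matrix (Fin (k+2)) (Fin (k+2)) ℂ) - cmvWindow (sh2 γ) 0 (k + 2) := by
    rw [show cmvWindow (sh2 γ) 0 (k+2) = cmvWindow γ 2 (k+2) from
      (by rw [show (2:ℤ) = 0 + 2 by norm_num, window_shift2])]
    ext i j
    rw [Matrix.submatrix_apply, Fin.zero_succAbove]
    exact win_entry_eq γ z 1 2 i.succ j.succ i j
      (by simp only [Fin.val_succ]; push_cast; omega)
      (by simp only [Fin.val_succ]; push_cast; omega)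
  have hsingle : ∀ p : Fin (k + 3), 0 < p →
      (∀ j : Fin (k + 1), (W.submatrix (Fin.succAbove p) Fin.succ) 0 j.succ = 0) ∧
      (W.submatrix (Fin.succAbove p) Fin.succ) 0 0 = γ 0 * (rhoC γ 1 : ℂ) := by
    intro p hp
    have hp0 : p.succAbove 0 = 0 := succAbove_zero_of_pos p hp
    constructor
    · intro j
      rw [Matrix.submatrix_apply, hp0, hW, win_apply,
        cmv_zero_row1 γ (by simp [Fin.val_succ]; push_cast; omega) _ (by norm_num)]
      simp [Fin.val_succ]
    · rw [Matrix.submatrix_apply, hp0, hW, win_apply]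
      norm_num [Fin.val_succ, cmvEntry]
  have hminor1 : ((W.submatrix (Fin.succAbove (0 : Fin (k+2)).succ) Fin.succ).submatrix
        Fin.succ (Fin.succAbove 0))
      = z • (1 : Matrix (Fin (k+1)) (Fin (k+1)) ℂ) - cmvWindow (sh2 γ) 1 (k + 1) := by
    rw [show cmvWindow (sh2 γ) 1 (k+1) = cmvWindow γ 3 (k+1) from
      (by rw [show (3:ℤ) = 1 + 2 by norm_num, window_shift2])]
    ext i j
    simp only [Matrix.submatrix_apply]
    refine win_entry_eq γ z 1 3 _ _ i j ?_ ?_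
    · simp only [val_succAbove, Fin.val_succ, Fin.val_zero]
      grind
    · simp only [Fin.zero_succAbove, val_succAbove, Fin.val_succ, Fin.val_zero]
      push_cast; omega
  have hminor2 : ((W.submatrix (Fin.succAbove (0 : Fin (k+1)).succ.succ) Fin.succ).submatrix
        Fin.succ (Fin.succAbove 0))
      = Pmat (sh2 γ) z (k + 1) := by
    unfold Pmat
    rw [show cmvWindow (sh2 γ) 0 (k+2) = cmvWindow γ 2 (k+2) from
      (by rw [show (2:ℤ) = 0 + 2 by norm_num, window_shift2])]
    ext i j
    simp only [Matrix.submatrix_apply]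
    refine win_entry_eq γ z 1 2 _ _ _ _ ?_ ?_
    · simp only [val_succAbove, Fin.val_succ, Fin.val_zero, Fin.val_one]
      grind
    · simp only [Fin.zero_succAbove, val_succAbove, Fin.val_succ, Fin.val_zero, Fin.val_one]
      first | (split_ifs <;> push_cast <;> omega) | (push_cast; omega)
  have e1 : (W.submatrix (Fin.succAbove (0 : Fin (k+2)).succ) Fin.succ).det
      = γ 0 * (rhoC γ 1 : ℂ) * Bdet (sh2 γ) z (k + 1) := by
    obtain ⟨hz0, he⟩ := hsingle _ (Fin.succ_pos _)
    rw [det_row0_single _ hz0, he, hminor1]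
    rfl
  have e2 : (W.submatrix (Fin.succAbove (0 : Fin (k+1)).succ.succ) Fin.succ).det
      = γ 0 * (rhoC γ 1 : ℂ) * Pdet (sh2 γ) z (k + 1) := by
    obtain ⟨hz0, he⟩ := hsingle _ (Fin.succ_pos _)
    rw [det_row0_single _ hz0, he, hminor2]
    rfl
  rw [hdet, Matrix.det_succ_column_zero, Fin.sum_univ_succ, Fin.sum_univ_succ, Fin.sum_univ_succ]
  rw [h00, h10, h20, hminor0, e1, e2,
    Finset.sum_eq_zero (fun j _ => by rw [hrest]; ring)]
  simp only [Fin.val_succ, Fin.val_zero]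
  show _ = _ * Adet (sh2 γ) z (k+2) + _ - _
  unfold Adet
  push_cast
  ring
lemma L3 (γ : ℤ → ℂ) (z : ℂ) (k : ℕ) :
    Pdet γ z (k + 3) = -(conj (γ 1) * (rhoC γ 0 : ℂ)) * Adet (sh2 γ) z (k + 2)
      - conj (γ 2) * (rhoC γ 0 : ℂ) * ((rhoC γ 1 : ℂ)) ^ 2 * Bdet (sh2 γ) z (k + 1)
      + (rhoC γ 0 : ℂ) * ((rhoC γ 1 : ℂ)) ^ 2 * (rhoC γ 2 : ℂ) * Pdet (sh2 γ) z (k + 1) := by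
  set P := Pmat γ z (k + 3) with hP
  have hdet : Pdet γ z (k + 3) = P.det := rfl
  have hs10 : Fin.succAbove (1 : Fin (k + 3 + 1)) 0 = 0 :=
    succAbove_zero_of_pos _ (by
      rw [Fin.lt_def]; norm_num)
  have hs1 : ∀ j : Fin (k + 2), Fin.succAbove (1 : Fin (k + 3 + 1)) j.succ = j.succ.succ := by
    intro j
    rw [Fin.ext_iff, val_succAbove]
    simp only [Fin.val_succ, Fin.val_one]
    grind
  have hPa : ∀ i j, P i j = (z • (1 : Matrix (Fin (k+3+1)) (Fin (k+3+1)) ℂ)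
      - cmvWindow γ 0 (k+3+1)) (Fin.succAbove 1 i) (Fin.succAbove 0 j) := fun i j => rfl
  have h00 : P 0 0 = -(conj (γ 1) * (rhoC γ 0 : ℂ)) := by
    rw [hPa, hs10, Fin.zero_succAbove, win_apply]
    norm_num [Fin.val_succ, cmvEntry]
  have h10 : P (0 : Fin (k+2)).succ 0 = -(conj (γ 2) * (rhoC γ 1 : ℂ)) := by
    rw [hPa, hs1, Fin.zero_succAbove, win_apply]
    simp only [Fin.val_succ, Fin.val_zero]; norm_num [Fin.val_succ, cmvEntry]
  have h20 : P (0 : Fin (k+1)).succ.succ 0 = -((rhoC γ 2 : ℂ) * (rhoC γ 1 : ℂ)) := by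
    rw [hPa, hs1, Fin.zero_succAbove, win_apply]
    simp only [Fin.val_succ, Fin.val_zero]; norm_num [Fin.val_succ, cmvEntry]
  have hrest : ∀ j : Fin k, P j.succ.succ.succ 0 = 0 := by
    intro j
    rw [hPa, hs1, Fin.zero_succAbove, win_apply,
      cmv_zero_col1 γ (by simp [Fin.val_succ]; push_cast; omega) _ (by norm_num [Fin.val_succ])]
    simp [Fin.val_succ]
  have hminor0 : P.submatrix (Fin.succAbove 0) Fin.succ
      = z • (1 : Matrix (Fin (k+2)) (Fin (k+2)) ℂ) - cmvWindow (sh2 γ) 0 (k + 2) := by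
    rw [show cmvWindow (sh2 γ) 0 (k+2) = cmvWindow γ 2 (k+2) from
      (by rw [show (2:ℤ) = 0 + 2 by norm_num, window_shift2])]
    ext i j
    rw [Matrix.submatrix_apply, Fin.zero_succAbove, hPa, hs1, Fin.zero_succAbove]
    refine win_entry_eq γ z 0 2 _ _ i j ?_ ?_
    · simp only [Fin.val_succ]; push_cast; omega
    · simp only [Fin.val_succ]; push_cast; omega
  have hsingle : ∀ p : Fin (k + 3), 0 < p →
      (∀ j : Fin (k + 1), (P.submatrix (Fin.succAbove p) Fin.succ) 0 j.succ = 0) ∧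
      (P.submatrix (Fin.succAbove p) Fin.succ) 0 0 = -((rhoC γ 1 : ℂ) * (rhoC γ 0 : ℂ)) := by
    intro p hp
    have hp0 : p.succAbove 0 = 0 := succAbove_zero_of_pos p hp
    constructor
    · intro j
      rw [Matrix.submatrix_apply, hp0, hPa, hs10, Fin.zero_succAbove, win_apply,
        cmv_zero_row0 γ (by simp [Fin.val_succ]; push_cast; omega) _ (by norm_num)]
      simp [Fin.val_succ]
    · rw [Matrix.submatrix_apply, hp0, hPa, hs10, Fin.zero_succAbove, win_apply]
      simp only [Fin.val_succ, Fin.val_zero]; norm_num [Fin.val_succ, cmvEntry]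
  have hminor1 : ((P.submatrix (Fin.succAbove (0 : Fin (k+2)).succ) Fin.succ).submatrix
        Fin.succ (Fin.succAbove 0))
      = z • (1 : Matrix (Fin (k+1)) (Fin (k+1)) ℂ) - cmvWindow (sh2 γ) 1 (k + 1) := by
    rw [show cmvWindow (sh2 γ) 1 (k+1) = cmvWindow γ 3 (k+1) from
      (by rw [show (3:ℤ) = 1 + 2 by norm_num, window_shift2])]
    ext i j
    simp only [Matrix.submatrix_apply]
    rw [hPa]
    refine win_entry_eq γ z 0 3 _ _ i j ?_ ?_
    · simp only [val_succAbove, Fin.val_succ, Fin.val_zero, Fin.val_one]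
      grind
    · simp only [Fin.zero_succAbove, val_succAbove, Fin.val_succ, Fin.val_zero, Fin.val_one]
      first | (split_ifs <;> push_cast <;> omega) | (push_cast; omega)
  have hminor2 : ((P.submatrix (Fin.succAbove (0 : Fin (k+1)).succ.succ) Fin.succ).submatrix
        Fin.succ (Fin.succAbove 0))
      = Pmat (sh2 γ) z (k + 1) := by
    unfold Pmat
    rw [show cmvWindow (sh2 γ) 0 (k+2) = cmvWindow γ 2 (k+2) from
      (by rw [show (2:ℤ) = 0 + 2 by norm_num, window_shift2])]
    ext i j
    simp only [Matrix.submatrix_apply]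
    rw [hPa]
    refine win_entry_eq γ z 0 2 _ _ _ _ ?_ ?_
    · simp only [val_succAbove, Fin.val_succ, Fin.val_zero, Fin.val_one]
      grind
    · simp only [Fin.zero_succAbove, val_succAbove, Fin.val_succ, Fin.val_zero, Fin.val_one]
      first | (split_ifs <;> push_cast <;> omega) | (push_cast; omega)
  have e1 : (P.submatrix (Fin.succAbove (0 : Fin (k+2)).succ) Fin.succ).det
      = -((rhoC γ 1 : ℂ) * (rhoC γ 0 : ℂ)) * Bdet (sh2 γ) z (k + 1) := by
    obtain ⟨hz0, he⟩ := hsingle _ (Fin.succ_pos _)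
    rw [det_row0_single _ hz0, he, hminor1]
    rfl
  have e2 : (P.submatrix (Fin.succAbove (0 : Fin (k+1)).succ.succ) Fin.succ).det
      = -((rhoC γ 1 : ℂ) * (rhoC γ 0 : ℂ)) * Pdet (sh2 γ) z (k + 1) := by
    obtain ⟨hz0, he⟩ := hsingle _ (Fin.succ_pos _)
    rw [det_row0_single _ hz0, he, hminor2]
    rfl
  rw [hdet, Matrix.det_succ_column_zero, Fin.sum_univ_succ, Fin.sum_univ_succ, Fin.sum_univ_succ]
  rw [h00, h10, h20, hminor0, e1, e2,
    Finset.sum_eq_zero (fun j _ => by rw [hrest]; ring)]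
  simp only [Fin.val_succ, Fin.val_zero]
  show _ = _ * Adet (sh2 γ) z (k+2) - _ + _
  unfold Adet
  push_cast
  ring
lemma factor (α : ℕ → ℂ) (z : ℂ) (n : ℕ) :
    szegoTransfer α z (n + 2)
      = szegoTransfer (fun k => α (k + 2)) z n * (szego z (α 1) * szego z (α 0)) := by
  induction n with
  | zero =>
    show szego z (α 1) * (szego z (α 0) * 1) = 1 * (szego z (α 1) * szego z (α 0))
    rw [mul_one, one_mul]
  | succ n ih =>
    show szego z (α (n + 2)) * szegoTransfer α z (n + 2) = (szego z (α (n + 2)) *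
      szegoTransfer (fun k => α (k + 2)) z n) * (szego z (α 1) * szego z (α 0))
    rw [ih, mul_assoc]
lemma strip (α : ℕ → ℂ) (hα : ∀ k, ‖α k‖ < 1) (z : ℂ) (hz : z * conj z = 1)
    (n : ℕ) :
    (uvP α z (n + 2)).1 = (uvP (fun k => α (k + 2)) z n).1 * (z ^ 2 + conj (α 1) * α 0 * z)
      + (uvP (fun k => α (k + 2)) z n).2 * (-(α 1) * z ^ 2 - α 0 * z)
    ∧ (uvP α z (n + 2)).2 = (uvP (fun k => α (k + 2)) z n).1 * (-(conj (α 0)) * z - conj (α 1))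
      + (uvP (fun k => α (k + 2)) z n).2 * (conj (α 0) * α 1 * z + 1) := by
  have h1 := stepA α hα z hz (n + 2)
  have h2 := stepA (fun k => α (k + 2)) (fun k => hα (k + 2)) z hz n
  have e0 := rho_smul_szego (hα 0) z
  have e1 := rho_smul_szego (hα 1) z
  set c : ℕ → ℂ := fun j => (Real.sqrt (1 - ‖α j‖ ^ 2) : ℂ) with hc
  have hsplit : (∏ j ∈ Finset.range (n + 2), c j) • szegoTransfer α z (n + 2)
      = ((∏ j ∈ Finset.range n, c (j + 2)) • szegoTransfer (fun k => α (k + 2)) z n) *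
        ((c 1 • szego z (α 1)) * (c 0 • szego z (α 0))) := by
    rw [factor, smul_mul_assoc, mul_smul_comm, smul_mul_assoc, mul_smul_comm, mul_smul_comm,
      smul_smul, smul_smul]
    congr 1
    rw [Finset.prod_range_succ', Finset.prod_range_succ']
    simp only [add_assoc]
    norm_num
    ring
  rw [h1] at hsplit
  rw [show (∏ j ∈ Finset.range n, c (j + 2)) = (∏ j ∈ Finset.range n,
      (Real.sqrt (1 - ‖(fun k => α (k + 2)) j‖ ^ 2) : ℂ)) from rfl, h2, e0, e1]
    at hsplit
  constructor
  · have h := congrFun (congrFun hsplit 0) 0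
    simp [Matrix.mul_apply, Fin.sum_univ_two] at h
    linear_combination h
  · have h := congrFun (congrFun hsplit 0) 1
    simp [Matrix.mul_apply, Fin.sum_univ_two] at h
    linear_combination h
lemma rho_sq {γ : ℤ → ℂ} (j : ℤ) (h : ‖γ j‖ < 1) :
    ((rhoC γ j : ℂ)) ^ 2 + γ j * conj (γ j) = 1 := by
  have h1 : ((rhoC γ j : ℂ)) ^ 2 = ((1 - ‖γ j‖ ^ 2 : ℝ) : ℂ) := by
    rw [show ((rhoC γ j : ℂ)) ^ 2 = (((rhoC γ j) ^ 2 : ℝ) : ℂ) by push_cast; ring]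
    norm_cast
    exact Real.sq_sqrt (by nlinarith [norm_nonneg (γ j)])
  rw [h1, Complex.mul_conj]
  rw [Complex.normSq_eq_norm_sq]
  push_cast
  ring
lemma base2 (γ : ℤ → ℂ) (hγ : ∀ k : ℕ, ‖γ (k : ℤ)‖ < 1) (z : ℂ)
    (hz : z * conj z = 1) :
    (uvP (fun k : ℕ => γ (k : ℤ)) z 2).1 = z * Bdet γ z 1 ∧
    (uvP (fun k : ℕ => γ (k : ℤ)) z 2).2
      = -(conj (γ 0)) * Bdet γ z 1 + (rhoC γ 0 : ℂ) * Pdet γ z 1 := by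
  have hr0 := rho_sq 0 (by simpa using hγ 0)
  have hB : Bdet γ z 1 = z + conj (γ 1) * γ 0 := by
    unfold Bdet
    rw [Matrix.det_fin_one, win_apply]
    norm_num [cmvEntry]
  have hP : Pdet γ z 1 = -(conj (γ 1) * (rhoC γ 0 : ℂ)) := by
    unfold Pdet
    rw [Matrix.det_fin_one]
    show (z • (1 : Matrix (Fin 2) (Fin 2) ℂ) - cmvWindow γ 0 2)
      (Fin.succAbove 1 0) (Fin.succAbove 0 0) = _
    rw [show Fin.succAbove (1 : Fin 2) 0 = 0 from by decide,
      show Fin.succAbove (0 : Fin 2) 0 = 1 from by decide, win_apply]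
    norm_num [cmvEntry]
  rw [hB, hP]
  constructor
  · simp [uvP]
    push_cast
    ring
  · simp [uvP]
    push_cast
    linear_combination (-(conj (γ 1))) * hz + conj (γ 1) * hr0
lemma base3 (γ : ℤ → ℂ) (hγ : ∀ k : ℕ, ‖γ (k : ℤ)‖ < 1) (z : ℂ)
    (hz : z * conj z = 1) :
    (uvP (fun k : ℕ => γ (k : ℤ)) z 3).1 = z * Bdet γ z 2 ∧
    (uvP (fun k : ℕ => γ (k : ℤ)) z 3).2
      = -(conj (γ 0)) * Bdet γ z 2 + (rhoC γ 0 : ℂ) * Pdet γ z 2 := by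
  have hr0 := rho_sq 0 (by simpa using hγ 0)
  have hr1 := rho_sq 1 (by simpa using hγ 1)
  have hB : Bdet γ z 2 = (z + conj (γ 1) * γ 0) * (z + conj (γ 2) * γ 1)
      + conj (γ 2) * γ 0 * ((rhoC γ 1 : ℂ)) ^ 2 := by
    unfold Bdet
    rw [Matrix.det_fin_two, win_apply, win_apply, win_apply, win_apply]
    norm_num [cmvEntry]
    ring
  have hP : Pdet γ z 2 = -(conj (γ 1) * (rhoC γ 0 : ℂ)) * (z + conj (γ 2) * γ 1)
      - conj (γ 2) * (rhoC γ 0 : ℂ) * ((rhoC γ 1 : ℂ)) ^ 2 := by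
    unfold Pdet
    rw [Matrix.det_fin_two]
    show (z • (1 : Matrix (Fin 3) (Fin 3) ℂ) - cmvWindow γ 0 3) (Fin.succAbove 1 0) (Fin.succAbove 0 0)
        * ((z • (1 : Matrix (Fin 3) (Fin 3) ℂ) - cmvWindow γ 0 3) (Fin.succAbove 1 1) (Fin.succAbove 0 1))
      - (z • (1 : Matrix (Fin 3) (Fin 3) ℂ) - cmvWindow γ 0 3) (Fin.succAbove 1 0) (Fin.succAbove 0 1)
        * ((z • (1 : Matrix (Fin 3) (Fin 3) ℂ) - cmvWindow γ 0 3) (Fin.succAbove 1 1) (Fin.succAbove 0 0)) = _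
    rw [show Fin.succAbove (1 : Fin 3) 0 = 0 from by decide,
      show Fin.succAbove (1 : Fin 3) 1 = 2 from by decide,
      show Fin.succAbove (0 : Fin 3) 0 = 1 from by decide,
      show Fin.succAbove (0 : Fin 3) 1 = 2 from by decide,
      win_apply, win_apply, win_apply, win_apply]
    norm_num [cmvEntry]
    ring
  rw [hB, hP]
  constructor
  · simp [uvP]
    push_cast
    linear_combination (conj (γ 2) * γ 0 * z + conj (γ 2) * γ 1 * z ^ 2) * hz
      - conj (γ 2) * γ 0 * z * hr1
  · simp [uvP]
    push_cast
    linear_combination (-(conj (γ 1)) * z - conj (γ 2) * γ 1 * conj (γ 0) * z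
        - conj (γ 2) * (z * conj z + 1)) * hz
      + conj (γ 2) * hr1
      + (conj (γ 1) * z + conj (γ 2) * γ 1 * conj (γ 1)
          + conj (γ 2) * ((rhoC γ 1 : ℂ)) ^ 2) * hr0
lemma keyC (z : ℂ) (hz : z * conj z = 1) :
    ∀ m : ℕ, ∀ γ : ℤ → ℂ, (∀ k : ℕ, ‖γ (k : ℤ)‖ < 1) →
      ((uvP (fun k : ℕ => γ (k : ℤ)) z (m + 2)).1 = z * Bdet γ z (m + 1) ∧
       (uvP (fun k : ℕ => γ (k : ℤ)) z (m + 2)).2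
         = -(conj (γ 0)) * Bdet γ z (m + 1) + (rhoC γ 0 : ℂ) * Pdet γ z (m + 1)) := by
  intro m
  induction m using Nat.strong_induction_on with
  | _ m IH =>
    match m with
    | 0 => exact fun γ hγ => base2 γ hγ z hz
    | 1 => exact fun γ hγ => base3 γ hγ z hz
    | (t + 2) =>
      intro γ hγ
      have hγ'' : ∀ k : ℕ, ‖sh2 γ (k : ℤ)‖ < 1 := by
        intro k
        show ‖γ ((k : ℤ) + 2)‖ < 1
        have := hγ (k + 2)
        rwa [show (((k + 2 : ℕ)) : ℤ) = (k : ℤ) + 2 from by push_cast; ring] at this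
      obtain ⟨iu, iv⟩ := IH t (by omega) (sh2 γ) hγ''
      obtain ⟨su, sv⟩ := strip (fun k : ℕ => γ (k : ℤ)) (fun k => hγ k) z hz (t + 2)
      have hre : (fun k : ℕ => γ ((k + 2 : ℕ) : ℤ)) = (fun k : ℕ => sh2 γ (k : ℤ)) := by
        funext k
        show γ (((k + 2 : ℕ)) : ℤ) = γ ((k : ℤ) + 2)
        norm_num
      rw [hre] at su sv
      have hsm1 : sh2 γ (-1) = γ 1 := by norm_num [sh2]
      have hs0 : sh2 γ 0 = γ 2 := by norm_num [sh2]
      have hrs0 : rhoC (sh2 γ) 0 = rhoC γ 2 := by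
        unfold rhoC; rw [hs0]
      have hL1 := L1 (sh2 γ) z t
      rw [hsm1, hs0, hrs0] at hL1
      have hr0 := rho_sq 0 (by simpa using hγ 0)
      have hr1 := rho_sq 1 (by simpa using hγ 1)
      simp only [Nat.cast_one, Nat.cast_zero] at su sv
      constructor
      · rw [su, iu, iv, L2 γ z t, hL1, hs0, hrs0]
        linear_combination (γ 0 * (rhoC γ 2 : ℂ) * z * Pdet (sh2 γ) z (t + 1)
          - conj (γ 2) * γ 0 * z * Bdet (sh2 γ) z (t + 1)) * hr1
      · rw [sv, iu, iv, L2 γ z t, L3 γ z t, hL1, hs0, hrs0]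
        linear_combination (conj (γ 2) * Bdet (sh2 γ) z (t + 1)
            - (rhoC γ 2 : ℂ) * Pdet (sh2 γ) z (t + 1)) * hr1
          + ((conj (γ 1) * (z + conj (γ 2) * γ 1) + conj (γ 2) * ((rhoC γ 1 : ℂ)) ^ 2)
              * Bdet (sh2 γ) z (t + 1)
            - (conj (γ 1) * γ 1 + ((rhoC γ 1 : ℂ)) ^ 2) * (rhoC γ 2 : ℂ)
              * Pdet (sh2 γ) z (t + 1)) * hr0
lemma windowDet_eq (γ : ℤ → ℂ) (z : ℂ) (a : ℤ) (m : ℕ) :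
    windowDet γ z a m = (z • (1 : Matrix (Fin m) (Fin m) ℂ) - cmvWindow γ a m).det := by
  unfold windowDet windowPoly
  rw [← Polynomial.coe_evalRingHom, RingHom.map_det]
  congr 1
  ext i j
  simp only [RingHom.mapMatrix_apply, Matrix.map_apply, Matrix.sub_apply, Matrix.smul_apply,
    Matrix.one_apply, smul_eq_mul, Polynomial.coe_evalRingHom, Polynomial.eval_sub,
    Polynomial.eval_mul, Polynomial.eval_C]
  split <;> simp
lemma norm_clm_le (M : Matrix (Fin 2) (Fin 2) ℂ) :
    ‖Matrix.toEuclideanCLM (𝕜 := ℂ) M‖ ≤ ‖M 0 0‖ + ‖M 0 1‖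
      + ‖M 1 0‖ + ‖M 1 1‖ := by
  apply ContinuousLinearMap.opNorm_le_bound _ (by positivity)
  intro x
  set y := Matrix.toEuclideanCLM (𝕜 := ℂ) M x with hy
  have happ : ∀ i, y i = M i 0 * x 0 + M i 1 * x 1 := by
    intro i
    have h2 := congrFun (Matrix.ofLp_toEuclideanCLM (n := Fin 2) (𝕜 := ℂ) M x) i
    rw [hy, h2]
    simp [Matrix.mulVec, dotProduct, Fin.sum_univ_two]
  have hx : ∀ j : Fin 2, ‖x j‖ ≤ ‖x‖ := by
    intro j
    rw [EuclideanSpace.norm_eq]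
    rw [show ‖x j‖ = Real.sqrt (‖x j‖ ^ 2) from (Real.sqrt_sq (norm_nonneg _)).symm]
    apply Real.sqrt_le_sqrt
    exact Finset.single_le_sum (f := fun i => ‖x i‖ ^ 2) (fun i _ => sq_nonneg _)
      (Finset.mem_univ j)
  have hnorm : ‖y‖ ≤ ‖y 0‖ + ‖y 1‖ := by
    rw [EuclideanSpace.norm_eq, Fin.sum_univ_two]
    rw [show ‖y 0‖ + ‖y 1‖ = Real.sqrt ((‖y 0‖ + ‖y 1‖) ^ 2) from
      (Real.sqrt_sq (by positivity)).symm]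
    apply Real.sqrt_le_sqrt
    nlinarith [norm_nonneg (y 0), norm_nonneg (y 1)]
  have hyi : ∀ i, ‖y i‖ ≤ (‖M i 0‖ + ‖M i 1‖) * ‖x‖ := by
    intro i
    rw [happ]
    calc ‖M i 0 * x 0 + M i 1 * x 1‖ ≤ ‖M i 0 * x 0‖ + ‖M i 1 * x 1‖ := norm_add_le _ _
      _ = ‖M i 0‖ * ‖x 0‖ + ‖M i 1‖ * ‖x 1‖ := by
          simp
      _ ≤ ‖M i 0‖ * ‖x‖ + ‖M i 1‖ * ‖x‖ := by
          gcongr <;> [exact hx 0; exact hx 1]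
      _ = (‖M i 0‖ + ‖M i 1‖) * ‖x‖ := by ring
  calc ‖y‖ ≤ ‖y 0‖ + ‖y 1‖ := hnorm
    _ ≤ (‖M 0 0‖ + ‖M 0 1‖) * ‖x‖
        + (‖M 1 0‖ + ‖M 1 1‖) * ‖x‖ := add_le_add (hyi 0) (hyi 1)
    _ = (‖M 0 0‖ + ‖M 0 1‖ + ‖M 1 0‖
        + ‖M 1 1‖) * ‖x‖ := by ring

set_option synthInstance.maxHeartbeats 1000000 in
set_option maxHeartbeats 1600000 in
theorem szegoTransfer_norm_upper_bound (α : ℕ → ℂ)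
    (hα : ∀ k, ‖α k‖ < 1) (n : ℕ) (z : ℂ) (hz : ‖z‖ = 1) :
    ‖Matrix.toEuclideanCLM (𝕜 := ℂ) (szegoTransfer α z n)‖ ≤
      8 * (∏ j ∈ Finset.range n, (Real.sqrt (1 - ‖α j‖ ^ 2))⁻¹) *
        max ‖windowDet (halfAlpha α) z 0 n‖
          ‖windowDet (halfAlpha α) z 1 (n - 1)‖ := by
  have hz' : z * conj z = 1 := by
    rw [Complex.mul_conj, Complex.normSq_eq_norm_sq, hz]
    norm_num
  rcases n with _ | k
  · have h1 : szegoTransfer α z 0 = 1 := rfl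
    rw [h1, _root_.map_one]
    have hid : ‖(1 : (EuclideanSpace ℂ (Fin 2)) →L[ℂ] (EuclideanSpace ℂ (Fin 2)))‖ = 1 :=
      ContinuousLinearMap.norm_id
    rw [hid]
    have hw0 : windowDet (halfAlpha α) z 0 0 = 1 := by
      rw [windowDet_eq]; exact Matrix.det_fin_zero
    have hw1 : windowDet (halfAlpha α) z 1 (0 - 1) = 1 := by
      rw [windowDet_eq]; exact Matrix.det_fin_zero
    rw [hw0, hw1]
    norm_num
  · set γ := halfAlpha α with hγdef
    have hγ : ∀ j : ℕ, ‖γ (j : ℤ)‖ < 1 := by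
      intro j
      show ‖halfAlpha α (j : ℤ)‖ < 1
      simp only [halfAlpha]
      rw [if_neg (by omega), Int.toNat_natCast]
      exact hα j
    have hres : (fun j : ℕ => γ (j : ℤ)) = α := by
      funext j
      show halfAlpha α (j : ℤ) = α j
      simp only [halfAlpha]
      rw [if_neg (by omega), Int.toNat_natCast]
    have hm1 : γ (-1) = -1 := by
      show halfAlpha α (-1) = -1
      simp [halfAlpha]
    have hBn : (uvP α z (k + 1)).1 = z * Bdet γ z k ∧
        (uvP α z (k + 1)).2 = Adet γ z (k + 1) - z * Bdet γ z k := by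
      rcases k with _ | t
      · have hA1 : Adet γ z 1 = z + conj (γ 0) * γ (-1) := by
          unfold Adet
          rw [Matrix.det_fin_one, win_apply]
          norm_num [cmvEntry]
        rw [hA1, hm1]
        constructor
        · show (uvP α z 1).1 = z * Bdet γ z 0
          simp [uvP, Bdet, Matrix.det_fin_zero]
        · show (uvP α z 1).2 = _
          have hg0 : γ (0 : ℤ) = α 0 := congrFun hres 0
          simp [uvP, Bdet, Matrix.det_fin_zero, hg0]
      · obtain ⟨hu, hv⟩ := keyC z hz' t γ hγ
        rw [hres] at hu hv
        refine ⟨hu, ?_⟩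
        have hL := L1 γ z t
        rw [hm1] at hL
        rw [hv, hL]
        ring
    obtain ⟨hu, hv⟩ := hBn
    have hA := stepA α hα z hz' (k + 1)
    set R := ∏ j ∈ Finset.range (k + 1), Real.sqrt (1 - ‖α j‖ ^ 2) with hR
    have hRpos : 0 < R := Finset.prod_pos (fun j _ => rho_pos (hα j))
    have hprodC : (∏ j ∈ Finset.range (k + 1),
        ((Real.sqrt (1 - ‖α j‖ ^ 2) : ℂ))) = (R : ℂ) := by
      rw [hR]; push_cast; rfl
    rw [hprodC] at hA
    have hS : szegoTransfer α z (k + 1) = (R : ℂ)⁻¹ •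
        !![(uvP α z (k+1)).1, (uvP α z (k+1)).2;
           z ^ (k+1) * conj ((uvP α z (k+1)).2), z ^ (k+1) * conj ((uvP α z (k+1)).1)] := by
      rw [← hA, inv_smul_smul₀ (by exact_mod_cast hRpos.ne')]
    rw [hS, _root_.map_smul]
    rw [norm_smul ((R : ℂ)⁻¹) (Matrix.toEuclideanCLM (𝕜 := ℂ)
      !![(uvP α z (k+1)).1, (uvP α z (k+1)).2;
         z ^ (k+1) * conj ((uvP α z (k+1)).2), z ^ (k+1) * conj ((uvP α z (k+1)).1)])]
    have hnormR : ‖(R : ℂ)⁻¹‖ = R⁻¹ := by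
      rw [norm_inv, Complex.norm_real, Real.norm_eq_abs, abs_of_pos hRpos]
    rw [hnormR]
    have hentry := norm_clm_le !![(uvP α z (k+1)).1, (uvP α z (k+1)).2;
           z ^ (k+1) * conj ((uvP α z (k+1)).2), z ^ (k+1) * conj ((uvP α z (k+1)).1)]
    simp only [show ∀ a b c d : ℂ, (!![a, b; c, d] : Matrix (Fin 2) (Fin 2) ℂ) 0 0 = a from
        fun a b c d => rfl,
      show ∀ a b c d : ℂ, (!![a, b; c, d] : Matrix (Fin 2) (Fin 2) ℂ) 0 1 = b from
        fun a b c d => rfl,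
      show ∀ a b c d : ℂ, (!![a, b; c, d] : Matrix (Fin 2) (Fin 2) ℂ) 1 0 = c from
        fun a b c d => rfl,
      show ∀ a b c d : ℂ, (!![a, b; c, d] : Matrix (Fin 2) (Fin 2) ℂ) 1 1 = d from
        fun a b c d => rfl] at hentry
    set A1 := Adet γ z (k + 1)
    set B1 := Bdet γ z k
    have habs : ∀ w : ℂ, ‖z ^ (k+1) * conj w‖ = ‖w‖ := by
      intro w
      rw [norm_mul, norm_pow, hz, one_pow, one_mul, Complex.norm_conj]
    have habsu : ‖(uvP α z (k+1)).1‖ = ‖B1‖ := by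
      rw [hu, norm_mul, hz, one_mul]
    have habsv : ‖(uvP α z (k+1)).2‖ ≤ ‖A1‖ + ‖B1‖ := by
      rw [hv]
      calc ‖A1 - z * B1‖ ≤ ‖A1‖ + ‖z * B1‖ := by
            exact norm_sub_le A1 (z * B1)
        _ = ‖A1‖ + ‖B1‖ := by rw [norm_mul, hz, one_mul]
    rw [habs, habs, habsu] at hentry
    set mx := max (‖windowDet (halfAlpha α) z 0 (k+1)‖)
          (‖windowDet (halfAlpha α) z 1 (k + 1 - 1)‖)
    have hmxA : ‖A1‖ ≤ mx := by
      apply le_trans _ (le_max_left _ _)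
      rw [windowDet_eq]
      exact le_rfl
    have hmxB : ‖B1‖ ≤ mx := by
      apply le_trans _ (le_max_right _ _)
      rw [show (k + 1 - 1) = k from rfl, windowDet_eq]
      exact le_rfl
    have hmx0 : 0 ≤ mx := le_trans (norm_nonneg _) hmxA
    have hbound : ‖Matrix.toEuclideanCLM (𝕜 := ℂ)
        !![(uvP α z (k+1)).1, (uvP α z (k+1)).2;
           z ^ (k+1) * conj ((uvP α z (k+1)).2), z ^ (k+1) * conj ((uvP α z (k+1)).1)]‖
        ≤ 8 * mx := by
      calc _ ≤ _ := hentry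
        _ ≤ ‖B1‖ + (‖A1‖ + ‖B1‖)
            + (‖A1‖ + ‖B1‖) + ‖B1‖ := by
            have := habsv
            gcongr
        _ ≤ mx + (mx + mx) + (mx + mx) + mx := by gcongr
        _ ≤ 8 * mx := by linarith
    rw [show (∏ j ∈ Finset.range (k+1), (Real.sqrt (1 - ‖α j‖ ^ 2))⁻¹) = R⁻¹ by
      rw [hR, ← Finset.prod_inv_distrib]]
    calc R⁻¹ * ‖_‖ ≤ R⁻¹ * (8 * mx) := by
          apply mul_le_mul_of_nonneg_left hbound (by positivity)
      _ = 8 * R⁻¹ * mx := by ring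
end
end
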